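/- Let g be a finite-dimensional Lie algebra over a field of characteristic zero. Then x lies in the nilpotent cone of g (i.e., ρ(x) is nilpotent in every finite-dimensional representation ρ) if and only if x ∈ [g, g] and ad(x) is nilpotent. -/

import Mathlib

open TensorProduct LieModule LieAlgebra Module

section AuxTrace

variable {K L V : Type*} [Field K] [LieRing L] [LieAlgebra K L]
  [AddCommGroup V] [Module K V] [LieRingModule L V] [LieModule K L V]

private lemma trace_restrict_eq_zero_aux
    (S : Submodule K V) (hS : ∀ y : L, ∀ v ∈ S, LieModule.toEnd K L V y v ∈ S)
    {x : L} (hx : x ∈ lowerCentralSeries K L L 1) :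
    LinearMap.trace K S ((LieModule.toEnd K L V x).restrict (hS x)) = 0 := by
  replace hx : x ∈ Submodule.span K {m | ∃ u v : L, ⁅u, v⁆ = m} := by
    rw [lowerCentralSeries_succ, lowerCentralSeries_zero, ← LieSubmodule.mem_toSubmodule,
      LieSubmodule.lieIdeal_oper_eq_linear_span'] at hx
    simpa using hx
  refine Submodule.span_induction
    (p := fun y _ ↦ LinearMap.trace K S ((LieModule.toEnd K L V y).restrict (hS y)) = 0)
    ?_ ?_ ?_ ?_ hx
  · rintro _ ⟨u, v, rfl⟩
    have h1 : (LieModule.toEnd K L V ⁅u, v⁆).restrict (hS ⁅u, v⁆) =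
        (LieModule.toEnd K L V u).restrict (hS u) ∘ₗ (LieModule.toEnd K L V v).restrict (hS v)
        - (LieModule.toEnd K L V v).restrict (hS v) ∘ₗ
            (LieModule.toEnd K L V u).restrict (hS u) := by
      refine LinearMap.ext fun w => Subtype.ext ?_
      simp [LinearMap.restrict_apply, Ring.lie_def]
    rw [h1, map_sub, ← Module.End.mul_eq_comp, ← Module.End.mul_eq_comp,
      LinearMap.trace_mul_comm, sub_self]
  · show LinearMap.trace K S ((LieModule.toEnd K L V (0 : L)).restrict (hS 0)) = 0
    have h0 : (LieModule.toEnd K L V (0 : L)).restrict (hS 0) = 0 := by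
      refine LinearMap.ext fun w => Subtype.ext ?_
      simp [LinearMap.restrict_apply]
    rw [h0, map_zero]
  · intro u v _ _ hu hv
    have hadd : (LieModule.toEnd K L V (u + v)).restrict (hS (u + v)) =
        (LieModule.toEnd K L V u).restrict (hS u)
          + (LieModule.toEnd K L V v).restrict (hS v) := by
      refine LinearMap.ext fun w => Subtype.ext ?_
      simp [LinearMap.restrict_apply]
    rw [hadd, map_add, hu, hv, add_zero]
  · intro c u _ hu
    have hsmul : (LieModule.toEnd K L V (c • u)).restrict (hS (c • u)) =
        c • (LieModule.toEnd K L V u).restrict (hS u) := by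
      refine LinearMap.ext fun w => Subtype.ext ?_
      simp [LinearMap.restrict_apply]
    rw [hsmul, map_smul, hu, smul_zero]

private lemma aux_closed (K L V : Type*) [Field K] [CharZero K] [IsAlgClosed K]
    [LieRing L] [LieAlgebra K L]
    [AddCommGroup V] [Module K V] [LieRingModule L V] [LieModule K L V]
    [FiniteDimensional K V] (x : L)
    (hx : x ∈ lowerCentralSeries K L L 1)
    (had : IsNilpotent (LieAlgebra.ad K L x)) :
    IsNilpotent (LieModule.toEnd K L V x) := by
  obtain ⟨N, hN⟩ := had
  -- the abelian Lie subalgebra spanned by `x`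
  let H : LieSubalgebra K L :=
    { Submodule.span K {x} with
      lie_mem' := by
        intro y z hy hz
        replace hy : y ∈ Submodule.span K {x} := hy
        replace hz : z ∈ Submodule.span K {x} := hz
        rw [Submodule.mem_span_singleton] at hy hz
        obtain ⟨c, rfl⟩ := hy
        obtain ⟨d, rfl⟩ := hz
        show ⁅c • x, d • x⁆ ∈ Submodule.span K {x}
        rw [smul_lie, lie_smul, lie_self, smul_zero, smul_zero]
        exact zero_mem _ }
  have hxH : x ∈ H := Submodule.mem_span_singleton_self x
  have memH : ∀ h : H, ∃ c : K, (h : L) = c • x := by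
    rintro ⟨h, hh⟩
    replace hh : h ∈ Submodule.span K {x} := hh
    rw [Submodule.mem_span_singleton] at hh
    obtain ⟨c, rfl⟩ := hh
    exact ⟨c, rfl⟩
  haveI : LieModule.IsTrivial H H := by
    constructor
    intro a b
    obtain ⟨c, hc⟩ := memH a
    obtain ⟨d, hd⟩ := memH b
    have : ((⁅a, b⁆ : H) : L) = 0 := by
      rw [LieSubalgebra.coe_bracket, hc, hd, smul_lie, lie_smul, lie_self, smul_zero, smul_zero]
    exact Subtype.ext this
  haveI : LieRing.IsNilpotent H := inferInstance
  -- every element of `L` is in the zero root space of `H`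
  have hL0 : ∀ y : L, y ∈ LieAlgebra.rootSpace H (0 : H → K) := by
    intro y
    rw [LieModule.mem_genWeightSpace]
    intro h
    obtain ⟨c, hc⟩ := memH h
    refine ⟨N, ?_⟩
    have he : LieModule.toEnd K H L h = c • LieAlgebra.ad K L x := by
      ext z
      show ⁅(h : L), z⁆ = c • ⁅x, z⁆
      rw [hc, smul_lie]
    simp only [Pi.zero_apply, zero_smul, sub_zero, he, smul_pow, hN, smul_zero,
      LinearMap.zero_apply]
  -- weight spaces of `V` are stable under all of `L`
  have hstab : ∀ (χ : H → K) (y : L), ∀ v ∈ (genWeightSpace V χ : Submodule K V),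
      LieModule.toEnd K L V y v ∈ (genWeightSpace V χ : Submodule K V) := by
    intro χ y v hv
    rw [LieSubmodule.mem_toSubmodule] at hv ⊢
    have h := LieAlgebra.lie_mem_genWeightSpace_of_mem_genWeightSpace (hL0 y) hv
    rwa [zero_add] at h
  -- all weights vanish on `x`
  have hweight : ∀ χ : H → K, genWeightSpace V χ ≠ ⊥ → χ ⟨x, hxH⟩ = 0 := by
    intro χ hne
    have h1 := LieModule.trace_toEnd_genWeightSpace (R := K) (L := H) (M := V) χ ⟨x, hxH⟩
    have h2 : LieModule.toEnd K H (genWeightSpace V χ) ⟨x, hxH⟩ =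
        (LieModule.toEnd K L V x).restrict (hstab χ x) := by
      rw [← LieSubmodule.toEnd_restrict_eq_toEnd]
      rfl
    rw [h2] at h1
    have h5 := trace_restrict_eq_zero_aux ((genWeightSpace V χ : Submodule K V)) (hstab χ) hx
    have h3 := LieModule.zero_lt_finrank_genWeightSpace hne
    have h4 : ((finrank K (genWeightSpace V χ) : K)) * χ ⟨x, hxH⟩ = 0 := by
      rw [← nsmul_eq_mul, ← h1]
      exact h5
    rcases mul_eq_zero.mp h4 with h5 | h5
    · exact absurd h5 (by exact_mod_cast h3.ne')
    · exact h5
  -- every vector is killed by a power of the action of `x`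
  have key : ∀ v : V, ∃ k : ℕ, ((LieModule.toEnd K L V x) ^ k) v = 0 := by
    intro v
    have hv : v ∈ ⨆ χ : H → K, genWeightSpace V χ := by
      rw [LieModule.iSup_genWeightSpace_eq_top]
      trivial
    refine LieSubmodule.iSup_induction (motive := fun w => ∃ k : ℕ, ((LieModule.toEnd K L V x) ^ k) w = 0)
      _ hv ?_ ⟨0, by simp⟩ ?_
    · intro χ w hw
      by_cases hbot : genWeightSpace V χ = ⊥
      · rw [hbot, LieSubmodule.mem_bot] at hw
        exact ⟨0, by simp [hw]⟩
      · have hχ := hweight χ hbot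
        rw [LieModule.mem_genWeightSpace] at hw
        obtain ⟨k, hk⟩ := hw ⟨x, hxH⟩
        refine ⟨k, ?_⟩
        rw [hχ] at hk
        simpa using hk
    · rintro u w ⟨k, hk⟩ ⟨l, hl⟩
      refine ⟨k + l, ?_⟩
      have hu : ((LieModule.toEnd K L V x) ^ (k + l)) u = 0 := by
        rw [add_comm, pow_add, Module.End.mul_apply, hk, map_zero]
      have hw : ((LieModule.toEnd K L V x) ^ (k + l)) w = 0 := by
        rw [pow_add, Module.End.mul_apply, hl, map_zero]
      rw [map_add, hu, hw, add_zero]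
  refine ⟨finrank K V, ?_⟩
  ext v
  obtain ⟨k, hk⟩ := key v
  have := Module.End.ker_pow_le_ker_pow_finrank (LieModule.toEnd K L V x) k
    (LinearMap.mem_ker.mpr hk)
  simpa [LinearMap.mem_ker] using this

end AuxTrace

/-- A finite-dimensional representation of a Lie algebra `L` over `K`. -/
structure FinDimRep (K L : Type) [Field K] [LieRing L] [LieAlgebra K L] : Type 1 where
  carrier : Type
  [isAddCommGroup : AddCommGroup carrier]
  [isModule : Module K carrier]
  [isLieRingModule : LieRingModule L carrier]
  [isLieModule : LieModule K L carrier]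
  [isFinite : FiniteDimensional K carrier]

attribute [instance] FinDimRep.isAddCommGroup FinDimRep.isModule FinDimRep.isLieRingModule
  FinDimRep.isLieModule FinDimRep.isFinite

/-- `x` lies in the nilpotent cone of `g` (acts nilpotently in every
finite-dimensional representation) iff `x ∈ [g,g]` and `ad(x)` is nilpotent. -/
theorem mem_nilpotentCone_iff
    (K L : Type) [Field K] [CharZero K] [LieRing L] [LieAlgebra K L]
    [FiniteDimensional K L] (x : L) :
    (∀ R : FinDimRep K L, IsNilpotent (LieModule.toEnd K L R.carrier x)) ↔
      (x ∈ ⁅(⊤ : LieIdeal K L), (⊤ : LieIdeal K L)⁆ ∧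
        IsNilpotent (LieAlgebra.ad K L x)) := by
  constructor
  · intro h
    constructor
    · by_contra hmem
      set W : Submodule K L :=
        ((⁅(⊤ : LieIdeal K L), (⊤ : LieIdeal K L)⁆ : LieIdeal K L) : Submodule K L) with hW
      have hxW : x ∉ W := by
        simpa [hW, LieSubmodule.mem_toSubmodule] using hmem
      have hxQ : (Submodule.Quotient.mk x : L ⧸ W) ≠ 0 := by
        simpa [Submodule.Quotient.mk_eq_zero] using hxW
      obtain ⟨ψ, hψ⟩ : ∃ ψ : Module.Dual K (L ⧸ W), ψ (Submodule.Quotient.mk x) ≠ 0 := by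
        by_contra hc
        push_neg at hc
        exact hxQ ((Module.forall_dual_apply_eq_zero_iff K _).mp hc)
      set φ : L →ₗ[K] K := (ψ (Submodule.Quotient.mk x))⁻¹ • (ψ ∘ₗ W.mkQ) with hφ
      have hφx : φ x = 1 := by
        simp only [hφ, LinearMap.smul_apply, LinearMap.comp_apply, Submodule.mkQ_apply,
          smul_eq_mul]
        exact inv_mul_cancel₀ hψ
      have hφbr : ∀ u v : L, φ ⁅u, v⁆ = 0 := by
        intro u v
        have hmem' : ⁅u, v⁆ ∈ W :=
          LieSubmodule.lie_mem_lie (LieSubmodule.mem_top _) (LieSubmodule.mem_top _)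
        simp [hφ, (Submodule.Quotient.mk_eq_zero W).mpr hmem']
      letI : LieRingModule L K :=
        { bracket := fun y t => φ y * t
          add_lie := fun y z t => by show φ (y + z) * t = _; simp [add_mul]
          lie_add := fun y t s => by show φ y * (t + s) = _; simp [mul_add]
          leibniz_lie := fun y z t => by
            show φ y * (φ z * t) = φ ⁅y, z⁆ * _ + φ z * (φ y * t)
            rw [hφbr]
            ring }
      letI : LieModule K L K :=
        { smul_lie := fun c y t => by
            show φ (c • y) * t = c • (φ y * t)
            simp [mul_assoc]
          lie_smul := fun c y t => by
            show φ y * (c • t) = c • (φ y * t)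
            simp [smul_eq_mul]
            ring }
      have hnil := h ⟨K⟩
      have hid : LieModule.toEnd K L K x = LinearMap.id := by
        refine LinearMap.ext fun t => ?_
        show φ x * t = t
        rw [hφx, one_mul]
      rw [hid] at hnil
      obtain ⟨n, hn⟩ := hnil
      have : (1 : K) = 0 := by
        have h7 := congrArg (fun g : Module.End K K => g 1) hn
        simp at h7
      exact one_ne_zero this
    · exact h ⟨L⟩
  · rintro ⟨hx, had⟩ R
    set A := AlgebraicClosure K
    have h1 : x ∈ lowerCentralSeries K L L 1 := by
      rw [LieModule.lowerCentralSeries_succ, LieModule.lowerCentralSeries_zero]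
      exact hx
    have h2 : (1 : A) ⊗ₜ[K] x ∈ lowerCentralSeries A (A ⊗[K] L) (A ⊗[K] L) 1 := by
      rw [LieModule.lowerCentralSeries_succ, LieModule.lowerCentralSeries_zero] at h1 ⊢
      rw [← LieSubmodule.baseChange_top, ← LieSubmodule.lie_baseChange]
      exact Submodule.tmul_mem_baseChange_of_mem 1 h1
    have h3 : IsNilpotent (LieAlgebra.ad A (A ⊗[K] L) ((1 : A) ⊗ₜ[K] x)) := by
      obtain ⟨n, hn⟩ := had
      refine ⟨n, ?_⟩
      have he : LieAlgebra.ad A (A ⊗[K] L) ((1 : A) ⊗ₜ[K] x) =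
          (LieAlgebra.ad K L x).baseChange A :=
        LieModule.toEnd_baseChange K A L L x
      rw [he, ← LinearMap.baseChange_pow, hn]
      ext
      simp
    have h4 := aux_closed A (A ⊗[K] L) (A ⊗[K] R.carrier) ((1 : A) ⊗ₜ[K] x) h2 h3
    rw [LieModule.toEnd_baseChange] at h4
    obtain ⟨n, hn⟩ := h4
    rw [← LinearMap.baseChange_pow] at hn
    refine ⟨n, ?_⟩
    -- a retraction of `v ↦ 1 ⊗ v`
    obtain ⟨g, hg⟩ := (Algebra.linearMap K A).exists_leftInverse_of_injective
      (LinearMap.ker_eq_bot.mpr (algebraMap K A).injective)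
    have hg1 : g 1 = 1 := by
      have := LinearMap.congr_fun hg 1
      simpa using this
    ext v
    have hv : ((LieModule.toEnd K L R.carrier x ^ n).baseChange A) ((1 : A) ⊗ₜ[K] v) = 0 := by
      rw [hn]; rfl
    rw [LinearMap.baseChange_tmul] at hv
    have := congrArg ((TensorProduct.lid K R.carrier).toLinearMap ∘ₗ
      (TensorProduct.map g LinearMap.id)) hv
    simpa [hg1] using this
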